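/- Let C be a finitely complete category satisfying the triangular lemma, and let an internal groupoid in C be given: objects C₀, C₁, C₂, C₃ and morphisms d₁, d₂ : C₁ ⟶ C₀, s : C₀ ⟶ C₁, p₁, p₂ : C₂ ⟶ C₁, m : C₂ ⟶ C₁, q₁, q₂ : C₃ ⟶ C₂, σ : C₁ ⟶ C₁, such that (C₂, p₁, p₂) is a pullback of d₁ along d₂ (i.e. p₂ ≫ d₁ = p₁ ≫ d₂ is a pullback square) and (C₃, q₁, q₂) is a pullback of p₁ along p₂ (i.e. q₂ ≫ p₁ = q₁ ≫ p₂ is a pullback square), satisfying (in the paper's applicative notation, where (f, g) : W ⟶ C₂ denotes the morphism induced into the pullback C₂ by f, g : W ⟶ C₁ with g ≫ d₁ = f ≫ d₂): (i) d₁ ∘ s = 𝟙 C₀ = d₂ ∘ s; (ii) m ∘ (1_{C₁}, s ∘ d₂) = 1_{C₁} = m ∘ (s ∘ d₁, 1_{C₁}); (iii) d₁ ∘ p₁ = d₁ ∘ m and d₂ ∘ p₂ = d₂ ∘ m; (iv) m ∘ (p₁ ∘ q₁, m ∘ q₂) = m ∘ (m ∘ q₁, p₂ ∘ q₂); (v)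 d₁ ∘ σ = d₂ and d₂ ∘ σ = d₁; (vi) m ∘ (1_{C₁}, σ) = s ∘ d₁ and m ∘ (σ, 1_{C₁}) = s ∘ d₂. Then the morphism ⟨d₁, d₂⟩ : C₁ ⟶ C₀ ⨯ C₀ is a monomorphism; that is, the internal groupoid is an internal equivalence relation. -/

import Mathlib

open CategoryTheory CategoryTheory.Limits

universe v u v₂ u₂

variable {C : Type u} [Category.{v} C]

/-- For an internal relation represented by `r : R₀ ⟶ X ⨯ X` and morphisms
`x, y : S ⟶ X`, `x R y` means `⟨x, y⟩` factors through `r`. -/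
def CategoryTheory.RelFactors [HasBinaryProducts C] {R₀ X : C} (r : R₀ ⟶ X ⨯ X)
    {S : C} (x y : S ⟶ X) : Prop :=
  ∃ u : S ⟶ R₀, u ≫ r = prod.lift x y

/-- `r : R₀ ⟶ X ⨯ X` represents an internal equivalence relation on `X`:
it is a monomorphism and the induced relation on generalized elements is reflexive,
symmetric and transitive. -/
structure CategoryTheory.IsInternalEquivalence [HasBinaryProducts C] {R₀ X : C}
    (r : R₀ ⟶ X ⨯ X) : Prop where
  mono : Mono r
  refl : ∀ ⦃S : C⦄ (x : S ⟶ X), RelFactors r x x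
  symm : ∀ ⦃S : C⦄ (x y : S ⟶ X), RelFactors r x y → RelFactors r y x
  trans : ∀ ⦃S : C⦄ (x y z : S ⟶ X),
    RelFactors r x y → RelFactors r y z → RelFactors r x z

/-- A category with binary products satisfies the *triangular lemma* if for all internal
equivalence relations `R, S, T` on an object `X` with `R ∩ S ≤ T`, whenever
`x R y`, `y S z` and `x T z`, then `y T z`. -/
def CategoryTheory.SatisfiesTriangularLemma (C : Type u) [Category.{v} C]
    [HasBinaryProducts C] : Prop :=
  ∀ ⦃X R₀ S₀ T₀ : C⦄ (r : R₀ ⟶ X ⨯ X) (s : S₀ ⟶ X ⨯ X) (t : T₀ ⟶ X ⨯ X),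
    IsInternalEquivalence r → IsInternalEquivalence s → IsInternalEquivalence t →
    (∀ ⦃W : C⦄ (x y : W ⟶ X), RelFactors r x y → RelFactors s x y → RelFactors t x y) →
    ∀ ⦃W : C⦄ (x y z : W ⟶ X),
      RelFactors r x y → RelFactors s y z → RelFactors t x z → RelFactors t y z

section KernelRelAux

variable [HasFiniteLimits C]

/-- The kernel relation of a morphism `f : X ⟶ Y`, as a subobject of `X ⨯ X`. -/
noncomputable def kernelRel {X Y : C} (f : X ⟶ Y) : pullback f f ⟶ X ⨯ X :=
  prod.lift (pullback.fst f f) (pullback.snd f f)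

lemma relFactors_kernelRel_iff {X Y : C} (f : X ⟶ Y) {S : C} (x y : S ⟶ X) :
    CategoryTheory.RelFactors (kernelRel f) x y ↔ x ≫ f = y ≫ f := by
  constructor
  · rintro ⟨u, hu⟩
    have hx : u ≫ pullback.fst f f = x := by
      have := congrArg (· ≫ prod.fst) hu
      simpa [kernelRel, prod.lift_fst, prod.lift_snd] using this
    have hy : u ≫ pullback.snd f f = y := by
      have := congrArg (· ≫ prod.snd) hu
      simpa [kernelRel, prod.lift_fst, prod.lift_snd] using this
    rw [← hx, ← hy, Category.assoc, Category.assoc, pullback.condition]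
  · intro h
    exact ⟨pullback.lift x y h, by apply Limits.prod.hom_ext <;> simp [kernelRel, prod.lift_fst, prod.lift_snd, pullback.lift_fst, pullback.lift_snd]⟩

lemma isInternalEquivalence_kernelRel {X Y : C} (f : X ⟶ Y) :
    CategoryTheory.IsInternalEquivalence (kernelRel f) := by
  constructor
  · constructor
    intro Z a b hab
    apply pullback.hom_ext
    · have := congrArg (· ≫ prod.fst) hab
      simpa [kernelRel, prod.lift_fst, prod.lift_snd] using this
    · have := congrArg (· ≫ prod.snd) hab
      simpa [kernelRel, prod.lift_fst, prod.lift_snd] using this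
  · intro S x
    rw [relFactors_kernelRel_iff]
  · intro S x y h
    rw [relFactors_kernelRel_iff] at *
    exact h.symm
  · intro S x y z h₁ h₂
    rw [relFactors_kernelRel_iff] at *
    exact h₁.trans h₂

end KernelRelAux

/-- In a finitely complete category satisfying the triangular lemma, every internal
groupoid is an internal equivalence relation: the morphism `⟨d₁, d₂⟩ : C₁ ⟶ C₀ ⨯ C₀`
is a monomorphism. -/
theorem internal_groupoid_is_relation [HasFiniteLimits C]
    (hC : SatisfiesTriangularLemma C)
    {C₀ C₁ C₂ C₃ : C} (d₁ d₂ : C₁ ⟶ C₀) (s : C₀ ⟶ C₁)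
    (p₁ p₂ : C₂ ⟶ C₁) (m : C₂ ⟶ C₁) (q₁ q₂ : C₃ ⟶ C₂) (σ : C₁ ⟶ C₁)
    -- `(C₂, p₁, p₂)` is a pullback of `d₁` along `d₂`
    (hpb₂ : IsPullback p₂ p₁ d₁ d₂)
    -- `(C₃, q₁, q₂)` is a pullback of `p₁` along `p₂`
    (hpb₃ : IsPullback q₂ q₁ p₁ p₂)
    -- (i)
    (hs₁ : s ≫ d₁ = 𝟙 C₀) (hs₂ : s ≫ d₂ = 𝟙 C₀)
    -- (iii)
    (hm₃ : m ≫ d₁ = p₁ ≫ d₁) (hm₄ : m ≫ d₂ = p₂ ≫ d₂)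
    -- (ii): `m ∘ (1, s ∘ d₂) = 1 = m ∘ (s ∘ d₁, 1)`
    (hm₁ : hpb₂.lift (d₂ ≫ s) (𝟙 C₁)
        (by rw [Category.assoc, hs₁, Category.comp_id, Category.id_comp]) ≫ m = 𝟙 C₁)
    (hm₂ : hpb₂.lift (𝟙 C₁) (d₁ ≫ s)
        (by rw [Category.id_comp, Category.assoc, hs₂, Category.comp_id]) ≫ m = 𝟙 C₁)
    -- (iv): associativity `m ∘ (p₁ ∘ q₁, m ∘ q₂) = m ∘ (m ∘ q₁, p₂ ∘ q₂)`
    (hassoc : hpb₂.lift (q₂ ≫ m) (q₁ ≫ p₁)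
        (by rw [Category.assoc, hm₃, ← Category.assoc, hpb₃.w, Category.assoc,
              hpb₂.w, ← Category.assoc]) ≫ m =
      hpb₂.lift (q₂ ≫ p₂) (q₁ ≫ m)
        (by rw [Category.assoc, hpb₂.w, ← Category.assoc, hpb₃.w, Category.assoc,
              ← hm₄, ← Category.assoc]) ≫ m)
    -- (v)
    (hσ₁ : σ ≫ d₁ = d₂) (hσ₂ : σ ≫ d₂ = d₁)
    -- (vi): `m ∘ (1, σ) = s ∘ d₁` and `m ∘ (σ, 1) = s ∘ d₂`
    (hσ₃ : hpb₂.lift σ (𝟙 C₁) (by rw [hσ₁, Category.id_comp]) ≫ m = d₁ ≫ s)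
    (hσ₄ : hpb₂.lift (𝟙 C₁) σ (by rw [hσ₂, Category.id_comp]) ≫ m = d₂ ≫ s) :
    Mono (prod.lift d₁ d₂) := by
  -- Composability of the two components of any generalized element of `C₂`.
  have hcomp : ∀ {W : C} {Z : C} (u : W ⟶ C₂) (k : C₀ ⟶ Z),
      u ≫ p₂ ≫ d₁ ≫ k = u ≫ p₁ ≫ d₂ ≫ k := by
    intro W Z u k
    have := reassoc_of% hpb₂.w
    rw [this]
  -- `key`: the first component of `u : W ⟶ C₂` is determined by its second
  -- component and its composite: `a = m(m(a,b), σ b)`.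
  have key : ∀ {W : C} (u : W ⟶ C₂),
      u ≫ p₁ = hpb₂.lift (u ≫ p₂ ≫ σ) (u ≫ m)
        (by simp only [Category.assoc, hσ₁, hm₄]) ≫ m := by
    intro W u
    -- the pair `w' = (b, σ b)` where `b = u ≫ p₂`
    have hw'c : (u ≫ p₂ ≫ σ) ≫ d₁ = (u ≫ p₂) ≫ d₂ := by
      simp only [Category.assoc, hσ₁]
    -- its composite is the identity at `d₂ a = d₁ b`
    have hw'm : hpb₂.lift (u ≫ p₂ ≫ σ) (u ≫ p₂) hw'c ≫ m = u ≫ p₁ ≫ d₂ ≫ s := by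
      have e : hpb₂.lift (u ≫ p₂ ≫ σ) (u ≫ p₂) hw'c =
          (u ≫ p₂) ≫ hpb₂.lift σ (𝟙 C₁) (by rw [hσ₁, Category.id_comp]) := by
        apply hpb₂.hom_ext <;> simp
      rw [e, Category.assoc, hσ₃]
      simpa using hcomp u s
    -- the triple `(a, b, σ b)` as a generalized element of `C₃`
    have htc : hpb₂.lift (u ≫ p₂ ≫ σ) (u ≫ p₂) hw'c ≫ p₁ = u ≫ p₂ := by simp
    -- side conditions
    have haux : (u ≫ p₂ ≫ σ) ≫ d₁ = (u ≫ m) ≫ d₂ := by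
      simp only [Category.assoc, hσ₁, hm₄]
    have haux₂ : (u ≫ p₁ ≫ d₂ ≫ s) ≫ d₁ = (u ≫ p₁) ≫ d₂ := by
      simp only [Category.assoc, hs₁, Category.comp_id]
    -- compute `t ≫ (LHS lift of hassoc)`
    have hL : hpb₃.lift (hpb₂.lift (u ≫ p₂ ≫ σ) (u ≫ p₂) hw'c) u htc ≫
        hpb₂.lift (q₂ ≫ m) (q₁ ≫ p₁)
          (by rw [Category.assoc, hm₃, ← Category.assoc, hpb₃.w, Category.assoc,
                hpb₂.w, ← Category.assoc]) =
        hpb₂.lift (u ≫ p₁ ≫ d₂ ≫ s) (u ≫ p₁) haux₂ := by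
      apply hpb₂.hom_ext
      · rw [Category.assoc, hpb₂.lift_fst, ← Category.assoc, hpb₃.lift_fst, hw'm,
          hpb₂.lift_fst]
      · rw [Category.assoc, hpb₂.lift_snd, ← Category.assoc, hpb₃.lift_snd,
          hpb₂.lift_snd]
    -- compute `t ≫ (RHS lift of hassoc)`
    have hR : hpb₃.lift (hpb₂.lift (u ≫ p₂ ≫ σ) (u ≫ p₂) hw'c) u htc ≫
        hpb₂.lift (q₂ ≫ p₂) (q₁ ≫ m)
          (by rw [Category.assoc, hpb₂.w, ← Category.assoc, hpb₃.w, Category.assoc,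
                ← hm₄, ← Category.assoc]) =
        hpb₂.lift (u ≫ p₂ ≫ σ) (u ≫ m) haux := by
      apply hpb₂.hom_ext
      · rw [Category.assoc, hpb₂.lift_fst, ← Category.assoc, hpb₃.lift_fst,
          hpb₂.lift_fst, hpb₂.lift_fst]
      · rw [Category.assoc, hpb₂.lift_snd, ← Category.assoc, hpb₃.lift_snd,
          hpb₂.lift_snd]
    -- the left-hand value is `a`
    have hLv : hpb₂.lift (u ≫ p₁ ≫ d₂ ≫ s) (u ≫ p₁) haux₂ ≫ m = u ≫ p₁ := by
      have e : hpb₂.lift (u ≫ p₁ ≫ d₂ ≫ s) (u ≫ p₁) haux₂ =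
          (u ≫ p₁) ≫ hpb₂.lift (d₂ ≫ s) (𝟙 C₁)
            (by rw [Category.assoc, hs₁, Category.comp_id, Category.id_comp]) := by
        apply hpb₂.hom_ext <;> simp
      rw [e, Category.assoc, hm₁, Category.comp_id]
    have hstep := congrArg
      (hpb₃.lift (hpb₂.lift (u ≫ p₂ ≫ σ) (u ≫ p₂) hw'c) u htc ≫ ·) hassoc
    have hstep₂ : hpb₂.lift (u ≫ p₁ ≫ d₂ ≫ s) (u ≫ p₁) haux₂ ≫ m =
        hpb₂.lift (u ≫ p₂ ≫ σ) (u ≫ m) haux ≫ m := by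
      rw [← hL, ← hR]
      exact (Category.assoc _ _ _).trans (hstep.trans (Category.assoc _ _ _).symm)
    exact hLv.symm.trans hstep₂
  -- right cancellation: same second component and same composite force
  -- the same first component.
  have rcancel : ∀ {W : C} (u v : W ⟶ C₂), u ≫ p₂ = v ≫ p₂ → u ≫ m = v ≫ m →
      u ≫ p₁ = v ≫ p₁ := by
    intro W u v h₂ hm
    have h₂' := reassoc_of% h₂
    rw [key u, key v]
    have e : hpb₂.lift (u ≫ p₂ ≫ σ) (u ≫ m)
          (by simp only [Category.assoc, hσ₁, hm₄]) =
        hpb₂.lift (v ≫ p₂ ≫ σ) (v ≫ m)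
          (by simp only [Category.assoc, hσ₁, hm₄]) := by
      apply hpb₂.hom_ext
      · rw [hpb₂.lift_fst, hpb₂.lift_fst, h₂']
      · rw [hpb₂.lift_snd, hpb₂.lift_snd, hm]
    rw [e]
  -- loops are trivial, via the triangular lemma with
  -- `R = Eq(p₁)`, `S = Eq(p₂)`, `T = Eq(m)` on the object `C₂`.
  have loop : ∀ {W : C} (h : W ⟶ C₁), h ≫ d₁ = h ≫ d₂ → h = h ≫ d₁ ≫ s := by
    intro W h hloop
    have hloop' := reassoc_of% hloop
    have hc₁ : (h ≫ d₁ ≫ s) ≫ d₁ = h ≫ d₂ := by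
      simp only [Category.assoc, hs₁, Category.comp_id, hloop]
    have hc₃ : h ≫ d₁ = (h ≫ d₁ ≫ s) ≫ d₂ := by
      simp only [Category.assoc, hs₂, Category.comp_id]
    have hw₁m : hpb₂.lift (h ≫ d₁ ≫ s) h hc₁ ≫ m = h := by
      have e : hpb₂.lift (h ≫ d₁ ≫ s) h hc₁ =
          h ≫ hpb₂.lift (d₂ ≫ s) (𝟙 C₁)
            (by rw [Category.assoc, hs₁, Category.comp_id, Category.id_comp]) := by
        apply hpb₂.hom_ext <;> simp [hloop']
      rw [e, Category.assoc, hm₁, Category.comp_id]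
    have hw₃m : hpb₂.lift h (h ≫ d₁ ≫ s) hc₃ ≫ m = h := by
      have e : hpb₂.lift h (h ≫ d₁ ≫ s) hc₃ =
          h ≫ hpb₂.lift (𝟙 C₁) (d₁ ≫ s)
            (by rw [Category.id_comp, Category.assoc, hs₂, Category.comp_id]) := by
        apply hpb₂.hom_ext <;> simp
      rw [e, Category.assoc, hm₂, Category.comp_id]
    have hRS_le_T : ∀ ⦃V : C⦄ (a b : V ⟶ C₂),
        RelFactors (kernelRel p₁) a b → RelFactors (kernelRel p₂) a b →
        RelFactors (kernelRel m) a b := by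
      intro V a b hab₁ hab₂
      rw [relFactors_kernelRel_iff] at hab₁ hab₂ ⊢
      rw [hpb₂.hom_ext hab₂ hab₁]
    have htri := hC (kernelRel p₁) (kernelRel p₂) (kernelRel m)
      (isInternalEquivalence_kernelRel p₁) (isInternalEquivalence_kernelRel p₂)
      (isInternalEquivalence_kernelRel m) hRS_le_T
      (hpb₂.lift (h ≫ d₁ ≫ s) h hc₁) (hpb₂.lift h h hloop)
      (hpb₂.lift h (h ≫ d₁ ≫ s) hc₃)
      (by rw [relFactors_kernelRel_iff]; simp)
      (by rw [relFactors_kernelRel_iff]; simp)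
      (by rw [relFactors_kernelRel_iff, hw₁m, hw₃m])
    rw [relFactors_kernelRel_iff] at htri
    have := rcancel (hpb₂.lift h h hloop) (hpb₂.lift h (h ≫ d₁ ≫ s) hc₃)
      (by simp) htri
    simpa using this
  -- main proof
  constructor
  intro W f g hfg
  have hd₁ : f ≫ d₁ = g ≫ d₁ := by
    have := congrArg (· ≫ prod.fst) hfg
    simpa [prod.lift_fst] using this
  have hd₂ : f ≫ d₂ = g ≫ d₂ := by
    have := congrArg (· ≫ prod.snd) hfg
    simpa [prod.lift_snd] using this
  -- `u = (f, σ g)`, `v = (g, σ g)`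
  have huc : (g ≫ σ) ≫ d₁ = f ≫ d₂ := by
    rw [Category.assoc, hσ₁, hd₂]
  have hvc : (g ≫ σ) ≫ d₁ = g ≫ d₂ := by
    rw [Category.assoc, hσ₁]
  have hvm : hpb₂.lift (g ≫ σ) g hvc ≫ m = g ≫ d₁ ≫ s := by
    have e : hpb₂.lift (g ≫ σ) g hvc =
        g ≫ hpb₂.lift σ (𝟙 C₁) (by rw [hσ₁, Category.id_comp]) := by
      apply hpb₂.hom_ext <;> simp
    rw [e, Category.assoc, hσ₃]
  -- `h := m(f, σ g)` is a loop at `f ≫ d₁`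
  have hhd₁ : (hpb₂.lift (g ≫ σ) f huc ≫ m) ≫ d₁ = f ≫ d₁ := by
    rw [Category.assoc, hm₃, ← Category.assoc, hpb₂.lift_snd]
  have hhd₂ : (hpb₂.lift (g ≫ σ) f huc ≫ m) ≫ d₂ = f ≫ d₁ := by
    rw [Category.assoc, hm₄, ← Category.assoc, hpb₂.lift_fst, Category.assoc,
      hσ₂, hd₁]
  have hloop := loop (hpb₂.lift (g ≫ σ) f huc ≫ m) (hhd₁.trans hhd₂.symm)
  have hum : hpb₂.lift (g ≫ σ) f huc ≫ m = hpb₂.lift (g ≫ σ) g hvc ≫ m := by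
    rw [hvm]
    conv_lhs => rw [hloop, ← Category.assoc, hhd₁, hd₁, Category.assoc]
  have := rcancel (hpb₂.lift (g ≫ σ) f huc) (hpb₂.lift (g ≫ σ) g hvc)
    (by simp) hum
  simpa using this
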